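/- Let b ≥ 2 and let x, z be natural numbers with 0 ≤ x < b^4 and 0 ≤ z < b^4. If x and z have the same difference pair, then K_b(x) = K_b(z). -/

import Mathlib

/-- The four base-`b` digits of `x` (viewed as a 4-digit string with leading
zeros allowed), sorted in decreasing order. -/
def sortedDigits (b x : ℕ) : List ℕ :=
  List.insertionSort (· ≥ ·) [x % b, x / b % b, x / b ^ 2 % b, x / b ^ 3 % b]

/-- The 4-digit base-`b` Kaprekar function `K_b(x) = D - A`. -/
def Kap (b x : ℕ) : ℕ :=
  let l := sortedDigits b x
  (l[0]! * b ^ 3 + l[1]! * b ^ 2 + l[2]! * b + l[3]!) -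
    (l[3]! * b ^ 3 + l[2]! * b ^ 2 + l[1]! * b + l[0]!)

/-- The difference pair `(a₃ - a₀, a₂ - a₁)` of a 4-digit base-`b` input. -/
def diffPair (b x : ℕ) : ℕ × ℕ :=
  let l := sortedDigits b x
  (l[0]! - l[3]!, l[1]! - l[2]!)

/-- `S_b`: the set of 4-digit base-`b` inputs whose sequence of Kaprekar
iterates is eventually constant and nonzero. -/
def KapSet (b : ℕ) : Set ℕ :=
  {x | x < b ^ 4 ∧
    ∃ t, (∀ s, t ≤ s → (Kap b)^[s] x = (Kap b)^[t] x) ∧ (Kap b)^[t] x ≠ 0}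

/-- Arrange the two coordinates of a pair in decreasing order. -/
def sort2 (p : ℕ × ℕ) : ℕ × ℕ := (max p.1 p.2, min p.1 p.2)

/-- A base-`b` difference pair: `b - 1 ≥ d ≥ d' ≥ 0`. -/
def IsDiffPair (b : ℕ) (p : ℕ × ℕ) : Prop := p.2 ≤ p.1 ∧ p.1 ≤ b - 1

/-- The Kaprekar map on base-`b` difference pairs. -/
def Kpair (b : ℕ) (p : ℕ × ℕ) : ℕ × ℕ :=
  if p.1 = 0 ∧ p.2 = 0 then (0, 0)
  else if p.2 = 0 then
    -- type (c)
    sort2 (p.1 - 1, b - p.1)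
  else if p.1 = p.2 ∨ p.1 + p.2 = b then
    -- type (b)
    sort2 ((2 * (p.1 : ℤ) - ((b : ℤ) - 1)).natAbs,
           (2 * (p.1 : ℤ) - ((b : ℤ) + 1)).natAbs)
  else
    -- type (a)
    sort2 ((2 * (p.1 : ℤ) - (b : ℤ)).natAbs, (2 * (p.2 : ℤ) - (b : ℤ)).natAbs)


lemma sortedDigits_eq (b x : ℕ) :
    ∃ p q r s : ℕ, sortedDigits b x = [p, q, r, s] ∧ s ≤ r ∧ r ≤ q ∧ q ≤ p := by
  have hs : (sortedDigits b x).Pairwise (· ≥ ·) :=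
    List.pairwise_insertionSort _ _
  have hl : (sortedDigits b x).length = 4 := by
    rw [sortedDigits, List.length_insertionSort]; rfl
  rcases hL : sortedDigits b x with _ | ⟨p, _ | ⟨q, _ | ⟨r, _ | ⟨s, _ | _⟩⟩⟩⟩ <;>
    rw [hL] at hl hs
  any_goals (simp at hl)
  simp [List.pairwise_cons] at hs
  exact ⟨p, q, r, s, rfl, by omega, by omega, by omega⟩

lemma key_sub (a c d e B : ℕ) (hB : 2 ≤ B) (h1 : e ≤ a) (h2 : d ≤ c) :
    (a * B ^ 3 + c * B ^ 2 + d * B + e) - (e * B ^ 3 + d * B ^ 2 + c * B + a) =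
      (a - e) * (B ^ 3 - 1) + (c - d) * (B ^ 2 - B) := by
  have hB1 : 1 ≤ B ^ 3 := Nat.one_le_pow _ _ (by omega)
  have hB2 : B ≤ B ^ 2 := by nlinarith
  have hle : e * B ^ 3 + d * B ^ 2 + c * B + a ≤ a * B ^ 3 + c * B ^ 2 + d * B + e := by
    have h3 : e * B ^ 3 + a ≤ a * B ^ 3 + e := by nlinarith
    have h4 : d * B ^ 2 + c * B ≤ c * B ^ 2 + d * B := by nlinarith
    omega
  zify [hle, h1, h2, hB1, hB2]
  ring

lemma kap_eq_diffPair (b x : ℕ) (hb : 2 ≤ b) :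
    Kap b x = (diffPair b x).1 * (b ^ 3 - 1) + (diffPair b x).2 * (b ^ 2 - b) := by
  obtain ⟨p, q, r, s, hL, h1, h2, h3⟩ := sortedDigits_eq b x
  simp only [Kap, diffPair, hL]
  simp only [List.getElem!_cons_zero, List.getElem!_cons_succ]
  exact key_sub p q r s b hb (le_trans h1 (le_trans h2 h3)) h2

/-- inputs with the same difference pair have the same Kaprekar image. -/
theorem kaprekar_same_diff_pair (b x z : ℕ) (hb : 2 ≤ b) (hx : x < b ^ 4)
    (hz : z < b ^ 4) (h : diffPair b x = diffPair b z) :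
    Kap b x = Kap b z := by
  rw [kap_eq_diffPair b x hb, kap_eq_diffPair b z hb, h]
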